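/- Let a, b, c > 0, δ ∈ {1,-1}, and real constants c1, c2. The function u(t,x) = (c1 - ct)·e^{ct} + 4δ·e^{ct/2}·√(cx/b) + (a/(2b))·x·(c2 + ((a + 2c)/2)·t - log x) satisfies u_t + a·x²·u_xx + b·x³·(u_xx)² + c·x·u_x - c·u = 0 for x > 0. -/

import Mathlib

lemma d1 (C1 C2 C3 C4 : ℝ) {y : ℝ} (hy : 0 < y) :
    HasDerivAt (fun z => C1 + C2 * Real.sqrt z + C3 * z * (C4 - Real.log z))
      (C2 * ((Real.sqrt y)⁻¹ / 2) + (C3 * (C4 - Real.log y) - C3)) y := by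
  have h1 := (Real.hasDerivAt_sqrt hy.ne').const_mul C2
  have h2a : HasDerivAt (fun z : ℝ => C3 * z) C3 y := by
    simpa using (hasDerivAt_id y).const_mul C3
  have h2 := h2a.mul ((hasDerivAt_const y C4).sub (Real.hasDerivAt_log hy.ne'))
  have h := ((hasDerivAt_const y C1).add h1).add h2
  refine h.congr_deriv ?_
  have hs : Real.sqrt y ≠ 0 := by positivity
  simp only [Pi.sub_apply]
  field_simp
  ring

lemma d2 (C2 C3 C4 : ℝ) {y : ℝ} (hy : 0 < y) :
    HasDerivAt (fun z => C2 * ((Real.sqrt z)⁻¹ / 2) + (C3 * (C4 - Real.log z) - C3))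
      (-(C2 / (4 * y * Real.sqrt y)) - C3 / y) y := by
  have hs : Real.sqrt y ≠ 0 := by positivity
  have h1 := (((Real.hasDerivAt_sqrt hy.ne').inv hs).div_const 2).const_mul C2
  have h2 := (((hasDerivAt_const y C4).sub (Real.hasDerivAt_log hy.ne')).const_mul C3).sub
    (hasDerivAt_const y C3)
  have h := h1.add h2
  refine h.congr_deriv ?_
  rw [Real.sq_sqrt hy.le]
  have hyy : Real.sqrt y * Real.sqrt y = y := Real.mul_self_sqrt hy.le
  field_simp
  ring

lemma dt (c c1 D K M : ℝ) (t : ℝ) :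
    HasDerivAt (fun s => (c1 - c * s) * Real.exp (c * s) + D * Real.exp (c * s / 2) + (K * s + M))
      ((-c) * Real.exp (c * t) + (c1 - c * t) * (c * Real.exp (c * t))
        + D * (Real.exp (c * t / 2) * (c / 2)) + K) t := by
  have e1 : HasDerivAt (fun s : ℝ => c * s) c t := by simpa using (hasDerivAt_id t).const_mul c
  have e2 : HasDerivAt (fun s : ℝ => Real.exp (c * s)) (Real.exp (c * t) * c) t := e1.exp
  have p1 := ((hasDerivAt_const t c1).sub e1).mul e2
  have e4 : HasDerivAt (fun s : ℝ => c * s / 2) (c / 2) t := e1.div_const 2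
  have p2 := e4.exp.const_mul D
  have p3a : HasDerivAt (fun s : ℝ => K * s) K t := by simpa using (hasDerivAt_id t).const_mul K
  have p3 := p3a.add (hasDerivAt_const t M)
  have h := (p1.add p2).add p3
  refine h.congr_deriv ?_
  simp only [Pi.sub_apply]
  ring

theorem stmt16 (a b c δ c1 c2 : ℝ)
    (ha : 0 < a)
    (hb : 0 < b)
    (hc : 0 < c)
    (hδ : δ = 1 ∨ δ = -1)
    (u : ℝ → ℝ → ℝ)
    (hu : ∀ t x : ℝ, u t x = (c1 - c * t) * Real.exp (c * t) + 4 * δ * Real.exp (c * t / 2) * Real.sqrt (c * x / b)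
      + (a / (2 * b)) * x * (c2 + ((a + 2 * c) / 2) * t - Real.log x)) :
    ∀ t x : ℝ, 0 < x →
      deriv (fun s => u s x) t
      + a * x ^ 2 * deriv (fun y => deriv (fun z => u t z) y) x
      + b * x ^ 3 * (deriv (fun y => deriv (fun z => u t z) y) x) ^ 2 + c * x * deriv (fun y => u t y) x - c * u t x = 0 := by
  intro t x hx
  have hcb : (0:ℝ) ≤ c / b := by positivity
  have hsplit : ∀ z : ℝ, Real.sqrt (c * z / b) = Real.sqrt (c / b) * Real.sqrt z := by
    intro z
    rw [show c * z / b = (c / b) * z from by ring, Real.sqrt_mul hcb]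
  -- space rewrite
  have hspace : (fun z => u t z) = fun z =>
      (c1 - c * t) * Real.exp (c * t)
      + (4 * δ * Real.exp (c * t / 2) * Real.sqrt (c / b)) * Real.sqrt z
      + (a / (2 * b)) * z * ((c2 + ((a + 2 * c) / 2) * t) - Real.log z) := by
    funext z
    rw [hu t z, hsplit z]
    ring
  have key1 : ∀ y : ℝ, 0 < y → deriv (fun z => u t z) y =
      (4 * δ * Real.exp (c * t / 2) * Real.sqrt (c / b)) * ((Real.sqrt y)⁻¹ / 2)
      + ((a / (2 * b)) * ((c2 + ((a + 2 * c) / 2) * t) - Real.log y) - a / (2 * b)) := by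
    intro y hy
    rw [hspace]
    exact (d1 _ _ _ _ hy).deriv
  have key2 : deriv (fun y => deriv (fun z => u t z) y) x =
      -((4 * δ * Real.exp (c * t / 2) * Real.sqrt (c / b)) / (4 * x * Real.sqrt x))
      - (a / (2 * b)) / x := by
    have hev : (fun y => deriv (fun z => u t z) y) =ᶠ[nhds x] (fun y =>
        (4 * δ * Real.exp (c * t / 2) * Real.sqrt (c / b)) * ((Real.sqrt y)⁻¹ / 2)
        + ((a / (2 * b)) * ((c2 + ((a + 2 * c) / 2) * t) - Real.log y) - a / (2 * b))) := by
      filter_upwards [isOpen_Ioi.mem_nhds hx] with y hy using key1 y hy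
    rw [hev.deriv_eq]
    exact (d2 _ _ _ hx).deriv
  have htime : (fun s => u s x) = fun s =>
      (c1 - c * s) * Real.exp (c * s)
      + (4 * δ * Real.sqrt (c / b) * Real.sqrt x) * Real.exp (c * s / 2)
      + (((a / (2 * b)) * x * ((a + 2 * c) / 2)) * s + (a / (2 * b)) * x * (c2 - Real.log x)) := by
    funext s
    rw [hu s x, hsplit x]
    ring
  have keyt : deriv (fun s => u s x) t =
      (-c) * Real.exp (c * t) + (c1 - c * t) * (c * Real.exp (c * t))
      + (4 * δ * Real.sqrt (c / b) * Real.sqrt x) * (Real.exp (c * t / 2) * (c / 2))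
      + (a / (2 * b)) * x * ((a + 2 * c) / 2) := by
    rw [htime]
    exact (dt c c1 _ _ _ t).deriv
  rw [keyt, key2, key1 x hx, hu t x, hsplit x]
  have hδ2 : δ * δ = 1 := by rcases hδ with h | h <;> rw [h] <;> norm_num
  have hRR : Real.sqrt x * Real.sqrt x = x := Real.mul_self_sqrt hx.le
  have hSS : Real.sqrt (c / b) * Real.sqrt (c / b) = c / b := Real.mul_self_sqrt hcb
  have hFF : Real.exp (c * t / 2) * Real.exp (c * t / 2) = Real.exp (c * t) := by
    rw [← Real.exp_add]; ring_nf
  have hRne : Real.sqrt x ≠ 0 := by positivity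
  have hbne : b ≠ 0 := hb.ne'
  have hxne : x ≠ 0 := hx.ne'
  clear hu hspace key1 key2 htime keyt hsplit hcb
  rcases hδ with h | h <;> subst h <;>
  · generalize hL : Real.log x = L
    generalize hR : Real.sqrt x = R at hRR hRne ⊢
    generalize hE : Real.exp (c * t) = E at hFF ⊢
    generalize hF : Real.exp (c * t / 2) = F at hFF ⊢
    generalize hS : Real.sqrt (c / b) = S at hSS ⊢
    have hxx : x = R * R := hRR.symm
    subst hxx
    have hEE : E = F * F := hFF.symm
    subst hEE
    have hcc : c = b * (S * S) := by
      field_simp at hSS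
      linarith [hSS]
    subst hcc
    field_simp
    ring
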